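/- Let Γ be a group containing an element γ of infinite order that is virtually unipotent. Then for any field F of positive characteristic and any n, there is no injective group homomorphism Γ → GL(n, F). -/

import Mathlib

/-- An element `γ` of a group `Γ` is virtually unipotent if every finite-dimensional
linear representation of `Γ` (over any field) sends `γ` to a matrix all of whose
eigenvalues, over the algebraic closure, are roots of unity. -/
def IsVirtuallyUnipotent {Γ : Type*} [Group Γ] (γ : Γ) : Prop :=
  ∀ (F : Type) (_ : Field F) (n : ℕ) (ρ : Γ →* GL (Fin n) F)
    (μ : AlgebraicClosure F),
    (((ρ γ : Matrix (Fin n) (Fin n) F)).map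
      (algebraMap F (AlgebraicClosure F))).charpoly.IsRoot μ →
    ∃ m : ℕ, 0 < m ∧ μ ^ m = 1

/-- A group containing an infinite-order virtually unipotent element admits no faithful
finite-dimensional linear representation over a field of positive characteristic. -/
theorem not_linear_pos_char_of_infinite_order_virtually_unipotent
    {Γ : Type*} [Group Γ] (γ : Γ) (hγ : IsVirtuallyUnipotent γ)
    (hinf : ¬ IsOfFinOrder γ)
    (F : Type) [Field F] (hchar : ringChar F ≠ 0) (n : ℕ) (ρ : Γ →* GL (Fin n) F) :
    ¬ Function.Injective ρ := by
  classical
  intro hinj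
  -- it suffices to find M > 0 with (ρ γ)^M = 1
  suffices h : ∃ M : ℕ, 0 < M ∧ ((ρ γ : Matrix (Fin n) (Fin n) F)) ^ M = 1 by
    obtain ⟨M, hM, hpow⟩ := h
    apply hinf
    rw [isOfFinOrder_iff_pow_eq_one]
    refine ⟨M, hM, hinj ?_⟩
    rw [map_pow, map_one]
    exact Units.ext (by simpa using hpow)
  rcases Nat.eq_zero_or_pos n with hn | hn
  · subst hn
    exact ⟨1, one_pos, Subsingleton.elim _ _⟩
  -- every root of the characteristic polynomial is a root of unity
  have hroots : ∀ r ∈ (((ρ γ : Matrix (Fin n) (Fin n) F)).map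
      (algebraMap F (AlgebraicClosure F))).charpoly.roots,
      ∃ m : ℕ, 0 < m ∧ r ^ m = 1 := by
    intro r hr
    exact hγ F _ n ρ r (Polynomial.isRoot_of_mem_roots hr)
  set K := AlgebraicClosure F with hK
  set A : Matrix (Fin n) (Fin n) F := (ρ γ : Matrix (Fin n) (Fin n) F) with hA
  set B : Matrix (Fin n) (Fin n) K := A.map (algebraMap F K) with hB
  set P : Polynomial K := B.charpoly with hP
  -- a common exponent killing all roots
  obtain ⟨m, hm, hmall⟩ : ∃ m : ℕ, 0 < m ∧ ∀ r ∈ P.roots, r ^ m = 1 := by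
    refine ⟨∏ r ∈ P.roots.toFinset, orderOf r, ?_, ?_⟩
    · apply Finset.prod_pos
      intro r hr
      obtain ⟨k, hk, hrk⟩ := hroots r (Multiset.mem_toFinset.mp hr)
      exact (isOfFinOrder_iff_pow_eq_one.mpr ⟨k, hk, hrk⟩).orderOf_pos
    · intro r hr
      rw [← orderOf_dvd_iff_pow_eq_one]
      exact Finset.dvd_prod_of_mem _ (Multiset.mem_toFinset.mpr hr)
  -- P divides (X^m - 1)^(number of roots)
  have hmonic : P.Monic := Matrix.charpoly_monic B
  have hsplit := (IsAlgClosed.splits P).eq_prod_roots_of_monic hmonic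
  set c := Multiset.card P.roots with hc
  have hdvd : P ∣ (Polynomial.X ^ m - 1) ^ c := by
    have h1 := Multiset.prod_dvd_prod_of_dvd (S := P.roots)
      (fun a => Polynomial.X - Polynomial.C a)
      (fun _ => (Polynomial.X : Polynomial K) ^ m - 1) (fun r hr => by
        rw [Polynomial.dvd_iff_isRoot]
        simp [Polynomial.IsRoot, hmall r hr])
    rw [Multiset.map_const', Multiset.prod_replicate] at h1
    rw [← hsplit] at h1
    exact h1
  -- Cayley–Hamilton : B^m - 1 is nilpotent
  have hnil : (B ^ m - 1) ^ c = 0 := by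
    obtain ⟨q, hq⟩ := hdvd
    have h2 : Polynomial.aeval B (((Polynomial.X : Polynomial K) ^ m - 1) ^ c)
        = (B ^ m - 1) ^ c := by simp
    rw [← h2, hq, map_mul, hP, Matrix.aeval_self_charpoly, zero_mul]
  -- characteristic p business
  set p := ringChar F with hp
  have hprime : p.Prime := (CharP.char_is_prime_or_zero F p).resolve_right hchar
  haveI : Fact p.Prime := ⟨hprime⟩
  haveI : CharP K p := charP_of_injective_ringHom (algebraMap F K).injective p
  haveI : Nonempty (Fin n) := Fin.pos_iff_nonempty.mp hn
  have hNc : (B ^ m - 1) ^ p ^ c = 0 := by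
    have hle : c ≤ p ^ c := le_of_lt (Nat.lt_pow_self (n := c) hprime.one_lt)
    calc (B ^ m - 1) ^ p ^ c = (B ^ m - 1) ^ c * (B ^ m - 1) ^ (p ^ c - c) := by
          rw [← pow_add, Nat.add_sub_cancel' hle]
      _ = 0 := by rw [hnil, zero_mul]
  have hBM : B ^ (m * p ^ c) = 1 := by
    have hcomm : Commute (B ^ m - 1) (1 : Matrix (Fin n) (Fin n) K) := Commute.one_right _
    have h3 : (B ^ m - 1 + 1) ^ p ^ c = (B ^ m - 1) ^ p ^ c + 1 ^ p ^ c :=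
      add_pow_char_pow_of_commute p c hcomm
    rw [sub_add_cancel, hNc, zero_add, one_pow] at h3
    rw [pow_mul, h3]
  refine ⟨m * p ^ c, Nat.mul_pos hm (pow_pos hprime.pos c), ?_⟩
  have h4 : ((algebraMap F K).mapMatrix (A ^ (m * p ^ c)) : Matrix (Fin n) (Fin n) K)
      = (algebraMap F K).mapMatrix (1 : Matrix (Fin n) (Fin n) F) := by
    rw [map_pow, map_one, RingHom.mapMatrix_apply, ← hB, hBM]
  exact Matrix.map_injective (algebraMap F K).injective h4
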